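/- Let G be a connected graph and v a vertex of G. The quotient map from the walk group 𝔚ᵥ(G) (prune classes of closed walks at v under concatenation) onto the fundamental group Π₁(G, v) (≡-classes of closed walks at v) is a surjective group homomorphism whose kernel is the normal subgroup D generated by the prune classes of all walks of the form γ * (v₁ v₂ v₃ v₄ v₁) * γ⁻¹, where (v₁ v₂ v₃ v₄ v₁) is a closed walk of length 4 (a diamond) and γ is any walk from v to v₁. Hence Π₁(G, v) ≅ 𝔚ᵥ(G)/D. -/

import Mathlib

/-- A graph: vertex type `V` with a symmetric adjacency relation (loops allowed). -/
structure WalkGraph (V : Type) where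
  Adj : V → V → Prop
  symm : Symmetric Adj

variable {V W X : Type}

/-- `l` is the (nonempty) vertex sequence of a walk in `G`. -/
def IsWalk (G : WalkGraph V) (l : List V) : Prop :=
  l ≠ [] ∧ l.Chain' G.Adj

/-- `l` is a walk in `G` from `x` to `y`. -/
def IsWalkFrom (G : WalkGraph V) (x y : V) (l : List V) : Prop :=
  l.Chain' G.Adj ∧ l.head? = some x ∧ l.getLast? = some y

/-- Concatenation of walks sharing an endpoint: follow `l`, then `m`. -/
def wconcat (l m : List V) : List V := l ++ m.tail

/-- A walk is prunable if some vertex `vᵢ` satisfies `vᵢ = vᵢ₊₂`. -/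
def Prunable (l : List V) : Prop :=
  ∃ (p s : List V) (a b : V), l = p ++ a :: b :: a :: s

/-- `m` is obtained from `l` by a single prune (deleting `vᵢ, vᵢ₊₁` when `vᵢ = vᵢ₊₂`). -/
def PruneOf (l m : List V) : Prop :=
  ∃ (p s : List V) (a b : V), l = p ++ a :: b :: a :: s ∧ m = p ++ a :: s

/-- A single prune step (in either direction) between walks of `G`. -/
def PruneStep (G : WalkGraph V) (l m : List V) : Prop :=
  IsWalk G l ∧ IsWalk G m ∧ (PruneOf l m ∨ PruneOf m l)

/-- Prune equivalence: the equivalence relation on walks of `G` generated by prunes. -/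
def PruneEqv (G : WalkGraph V) : List V → List V → Prop :=
  Relation.EqvGen (PruneStep G)

/-- A spider move: two walks of `G` of the same length which agree at every index
except (at most) a single interior index. -/
def SpiderStep (G : WalkGraph V) (l m : List V) : Prop :=
  IsWalk G l ∧ IsWalk G m ∧ l.length = m.length ∧
    ∃ i : ℕ, 0 < i ∧ i + 1 < l.length ∧ ∀ j : ℕ, j ≠ i → l[j]? = m[j]?

/-- Homotopy rel endpoints (`≡`): the equivalence relation on walks of `G`
generated by prunes and spider moves. -/
def HomEqv (G : WalkGraph V) : List V → List V → Prop :=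
  Relation.EqvGen (fun l m => PruneStep G l m ∨ SpiderStep G l m)

/-- A graph morphism. -/
def IsHom (G : WalkGraph V) (H : WalkGraph W) (f : V → W) : Prop :=
  ∀ {u v : V}, G.Adj u v → H.Adj (f u) (f v)

/-- One step of a ×-homotopy between graph morphisms. -/
def HtpyStep (G : WalkGraph V) (H : WalkGraph W) (f g : V → W) : Prop :=
  IsHom G H f ∧ IsHom G H g ∧ ∀ u v, G.Adj u v → H.Adj (f u) (g v)

/-- ×-homotopy of graph morphisms. -/
def Homotopic (G : WalkGraph V) (H : WalkGraph W) : (V → W) → (V → W) → Prop :=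
  Relation.ReflTransGen (HtpyStep G H)

/-- Walks representing elements of the subgroup `D` of the walk group at `v`: finite
products of conjugated diamonds `γ * (v₁ v₂ v₃ v₄ v₁) * γ⁻¹` (a diamond is a closed
walk of length 4, i.e. a list of 5 vertices). -/
inductive InDiamondSubgroup (G : WalkGraph V) (v : V) : List V → Prop
  | nil : InDiamondSubgroup G v [v]
  | cons (γ d δ : List V) (u : V) :
      IsWalkFrom G v u γ → IsWalkFrom G u u d → d.length = 5 →
      InDiamondSubgroup G v δ →
      InDiamondSubgroup G v (wconcat (wconcat (wconcat γ d) γ.reverse) δ)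

section ChainCompat

@[simp] lemma List.chain'_singleton {α : Type} {R : α → α → Prop} (a : α) : List.Chain' R [a] :=
  List.isChain_singleton a

@[simp] lemma List.chain'_nil {α : Type} {R : α → α → Prop} : List.Chain' R [] :=
  List.isChain_nil

@[simp] lemma List.chain'_cons {α : Type} {R : α → α → Prop} {x y : α} {l : List α} :
    List.Chain' R (x :: y :: l) ↔ R x y ∧ List.Chain' R (y :: l) :=
  List.isChain_cons_cons

lemma List.chain'_append {α : Type} {R : α → α → Prop} {l₁ l₂ : List α} :
    List.Chain' R (l₁ ++ l₂) ↔ List.Chain' R l₁ ∧ List.Chain' R l₂ ∧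
      ∀ x ∈ l₁.getLast?, ∀ y ∈ l₂.head?, R x y :=
  List.isChain_append

lemma List.chain'_reverse {α : Type} {R : α → α → Prop} {l : List α} :
    List.Chain' R l.reverse ↔ List.Chain' (flip R) l :=
  List.isChain_reverse

lemma List.head_cons_tail {α : Type} (x : List α) (h : x ≠ []) : x.head h :: x.tail = x := by
  cases x with
  | nil => exact absurd rfl h
  | cons a t => rfl

end ChainCompat

section Basic
variable {G : WalkGraph V}

lemma IsWalkFrom.ne_nil {x y : V} {l : List V} (h : IsWalkFrom G x y l) : l ≠ [] := by
  rcases h with ⟨-, h2, -⟩; rintro rfl; simp at h2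

lemma IsWalkFrom.isWalk {x y : V} {l : List V} (h : IsWalkFrom G x y l) : IsWalk G l :=
  ⟨h.ne_nil, h.1⟩

lemma wconcat_single (l : List V) (a : V) : wconcat l [a] = l := by simp [wconcat]

lemma wconcat_assoc (l m n : List V) (hm : m ≠ []) :
    wconcat (wconcat l m) n = wconcat l (wconcat m n) := by
  cases m with
  | nil => simp at hm
  | cons x t => simp [wconcat]

lemma head?_wconcat {l : List V} (m : List V) (hl : l ≠ []) :
    (wconcat l m).head? = l.head? := by
  cases l with
  | nil => simp at hl
  | cons x t => simp [wconcat]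

lemma wconcat_eq_dropLast_append {l m : List V} (hl : l ≠ []) (hm : m ≠ [])
    (h : l.getLast? = m.head?) : wconcat l m = l.dropLast ++ m := by
  cases m with
  | nil => simp at hm
  | cons c t =>
    have h1 : l.getLast hl = c := by
      rw [List.getLast?_eq_getLast hl] at h; simpa using h
    conv_lhs => rw [wconcat, ← List.dropLast_append_getLast hl]
    simp [h1]

lemma getLast?_wconcat {l m : List V} (hl : l ≠ []) (hm : m ≠ [])
    (h : l.getLast? = m.head?) : (wconcat l m).getLast? = m.getLast? := by
  rw [wconcat_eq_dropLast_append hl hm h, List.getLast?_append_of_ne_nil _ hm]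

lemma tail_reverse_eq (l : List V) (hl : l ≠ []) :
    l.reverse.tail = l.dropLast.reverse := by
  conv_lhs => rw [← List.dropLast_append_getLast hl]
  simp

lemma isWalk_wconcat {l m : List V} (hl : IsWalk G l) (hm : IsWalk G m)
    (h : l.getLast? = m.head?) : IsWalk G (wconcat l m) := by
  refine ⟨by simp [wconcat, hl.1], ?_⟩
  cases m with
  | nil => exact absurd rfl hm.1
  | cons c t =>
    cases t with
    | nil => simpa [wconcat] using hl.2
    | cons d t' =>
      rw [wconcat]
      rw [List.chain'_append]
      refine ⟨hl.2, (hm.2).tail, ?_⟩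
      intro x hx y hy
      simp at hy
      have hcd : G.Adj c d := (List.chain'_cons.mp hm.2).1
      rw [h] at hx; simp at hx
      subst hx; subst hy; exact hcd

end Basic

section Basic2
variable {G : WalkGraph V}

lemma chain'_reverse_of {l : List V} (h : l.Chain' G.Adj) : l.reverse.Chain' G.Adj := by
  rw [List.chain'_reverse]
  exact h.imp (fun a b hab => G.symm hab)

lemma IsWalk.reverse {l : List V} (h : IsWalk G l) : IsWalk G l.reverse :=
  ⟨by simp [h.1], chain'_reverse_of h.2⟩

lemma IsWalkFrom.reverse {x y : V} {l : List V} (h : IsWalkFrom G x y l) :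
    IsWalkFrom G y x l.reverse :=
  ⟨chain'_reverse_of h.1, by rw [List.head?_reverse]; exact h.2.2,
   by rw [List.getLast?_reverse]; exact h.2.1⟩

lemma IsWalkFrom.wconcat' {x y z : V} {l m : List V} (hl : IsWalkFrom G x y l)
    (hm : IsWalkFrom G y z m) : IsWalkFrom G x z (wconcat l m) := by
  have he : l.getLast? = m.head? := by rw [hl.2.2, hm.2.1]
  refine ⟨(isWalk_wconcat hl.isWalk hm.isWalk he).2, ?_, ?_⟩
  · rw [head?_wconcat _ hl.ne_nil]; exact hl.2.1
  · rw [getLast?_wconcat hl.ne_nil hm.ne_nil he]; exact hm.2.2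

lemma reverse_wconcat {l m : List V} (hl : l ≠ []) (hm : m ≠ [])
    (h : l.getLast? = m.head?) :
    (wconcat l m).reverse = wconcat m.reverse l.reverse := by
  rw [wconcat_eq_dropLast_append hl hm h, List.reverse_append, wconcat,
    tail_reverse_eq l hl]

end Basic2

section Prune
variable {G : WalkGraph V}

lemma PruneOf.head?_eq {l m : List V} (h : PruneOf l m) : l.head? = m.head? := by
  obtain ⟨p, s, a, b, rfl, rfl⟩ := h
  cases p <;> simp

lemma PruneOf.getLast?_eq {l m : List V} (h : PruneOf l m) : l.getLast? = m.getLast? := by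
  obtain ⟨p, s, a, b, rfl, rfl⟩ := h
  have h1 : (a :: b :: a :: s) = [a, b] ++ (a :: s) := by simp
  rw [List.getLast?_append_of_ne_nil _ (by simp : (a:: b:: a:: s) ≠ []),
    List.getLast?_append_of_ne_nil _ (by simp : (a :: s) ≠ []), h1,
    List.getLast?_append_of_ne_nil _ (by simp : (a :: s) ≠ [])]

lemma PruneOf.isWalk {l m : List V} (hl : IsWalk G l) (h : PruneOf l m) : IsWalk G m := by
  obtain ⟨p, s, a, b, rfl, rfl⟩ := h
  have h2 := hl.2
  rw [List.chain'_append] at h2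
  obtain ⟨hp, hc, hcon⟩ := h2
  rw [List.chain'_cons, List.chain'_cons] at hc
  refine ⟨by simp, ?_⟩
  rw [List.chain'_append]
  refine ⟨hp, hc.2.2, ?_⟩
  simpa using hcon

lemma PruneStep.symm {l m : List V} (h : PruneStep G l m) : PruneStep G m l :=
  ⟨h.2.1, h.1, h.2.2.symm⟩

lemma PruneStep.head?_eq {l m : List V} (h : PruneStep G l m) : l.head? = m.head? := by
  rcases h.2.2 with h' | h'
  · exact h'.head?_eq
  · exact h'.head?_eq.symm

lemma PruneStep.getLast?_eq {l m : List V} (h : PruneStep G l m) : l.getLast? = m.getLast? := by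
  rcases h.2.2 with h' | h'
  · exact h'.getLast?_eq
  · exact h'.getLast?_eq.symm

lemma pruneEqv_of_pruneOf {l m : List V} (hl : IsWalk G l) (h : PruneOf l m) :
    PruneEqv G l m :=
  Relation.EqvGen.rel _ _ ⟨hl, h.isWalk hl, Or.inl h⟩

lemma PruneEqv.head?_eq {l m : List V} (h : PruneEqv G l m) : l.head? = m.head? := by
  induction h with
  | rel _ _ h => exact h.head?_eq
  | refl => rfl
  | symm _ _ _ ih => exact ih.symm
  | trans _ _ _ _ _ ih1 ih2 => exact ih1.trans ih2

lemma PruneEqv.getLast?_eq {l m : List V} (h : PruneEqv G l m) : l.getLast? = m.getLast? := by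
  induction h with
  | rel _ _ h => exact h.getLast?_eq
  | refl => rfl
  | symm _ _ _ ih => exact ih.symm
  | trans _ _ _ _ _ ih1 ih2 => exact ih1.trans ih2

lemma pruneOf_append_left {l m : List V} (p : List V) (h : PruneOf l m) :
    PruneOf (p ++ l) (p ++ m) := by
  obtain ⟨q, s, a, b, rfl, rfl⟩ := h
  exact ⟨p ++ q, s, a, b, by simp, by simp⟩

lemma pruneOf_append_right {l m : List V} (s : List V) (h : PruneOf l m) :
    PruneOf (l ++ s) (m ++ s) := by
  obtain ⟨q, t, a, b, rfl, rfl⟩ := h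
  exact ⟨q, t ++ s, a, b, by simp, by simp⟩

end Prune

section PruneCtx
variable {G : WalkGraph V}

lemma PruneOf.ne_nil {l m : List V} (h : PruneOf l m) : l ≠ [] := by
  obtain ⟨p, s, a, b, rfl, -⟩ := h; simp

lemma PruneStep.wconcat_right {l m n : List V} (h : PruneStep G l m) (hn : IsWalk G n)
    (he : l.getLast? = n.head?) : PruneStep G (wconcat l n) (wconcat m n) := by
  refine ⟨isWalk_wconcat h.1 hn he, isWalk_wconcat h.2.1 hn (h.getLast?_eq ▸ he), ?_⟩
  rcases h.2.2 with h' | h'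
  · exact Or.inl (pruneOf_append_right n.tail h')
  · exact Or.inr (pruneOf_append_right n.tail h')

lemma PruneStep.wconcat_left {l m γ : List V} (hg : IsWalk G γ)
    (he : γ.getLast? = l.head?) (h : PruneStep G l m) :
    PruneStep G (wconcat γ l) (wconcat γ m) := by
  have hln : l ≠ [] := h.1.1
  have hmn : m ≠ [] := h.2.1.1
  have hem : γ.getLast? = m.head? := he.trans h.head?_eq
  rw [wconcat_eq_dropLast_append hg.1 hln he, wconcat_eq_dropLast_append hg.1 hmn hem]
  refine ⟨?_, ?_, ?_⟩
  · rw [← wconcat_eq_dropLast_append hg.1 hln he]; exact isWalk_wconcat hg h.1 he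
  · rw [← wconcat_eq_dropLast_append hg.1 hmn hem]; exact isWalk_wconcat hg h.2.1 hem
  · rcases h.2.2 with h' | h'
    · exact Or.inl (pruneOf_append_left _ h')
    · exact Or.inr (pruneOf_append_left _ h')

lemma PruneEqv.wconcat_right {l m n : List V} (h : PruneEqv G l m) (hn : IsWalk G n) :
    l.getLast? = n.head? → PruneEqv G (wconcat l n) (wconcat m n) := by
  induction h with
  | rel a b hab => exact fun he => Relation.EqvGen.rel _ _ (hab.wconcat_right hn he)
  | refl a => exact fun _ => Relation.EqvGen.refl _
  | symm a b hab ih =>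
      intro he
      exact Relation.EqvGen.symm _ _ (ih ((PruneEqv.getLast?_eq hab) ▸ he))
  | trans a b c hab hbc ih1 ih2 =>
      intro he
      exact Relation.EqvGen.trans _ _ _ (ih1 he) (ih2 ((PruneEqv.getLast?_eq hab) ▸ he))

lemma PruneEqv.wconcat_left {l m γ : List V} (hg : IsWalk G γ) (h : PruneEqv G l m) :
    γ.getLast? = l.head? → PruneEqv G (wconcat γ l) (wconcat γ m) := by
  induction h with
  | rel a b hab => exact fun he => Relation.EqvGen.rel _ _ (PruneStep.wconcat_left hg he hab)
  | refl a => exact fun _ => Relation.EqvGen.refl _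
  | symm a b hab ih =>
      intro he
      exact Relation.EqvGen.symm _ _ (ih ((PruneEqv.head?_eq hab) ▸ he))
  | trans a b c hab hbc ih1 ih2 =>
      intro he
      exact Relation.EqvGen.trans _ _ _ (ih1 he) (ih2 ((PruneEqv.head?_eq hab) ▸ he))

/-- cancellation: `l * l⁻¹` prunes to the trivial walk. -/
lemma pruneEqv_cancel : ∀ (l : List V), IsWalk G l → ∀ a, l.head? = some a →
    PruneEqv G (wconcat l l.reverse) [a] := by
  intro l
  induction l with
  | nil => intro h; exact absurd rfl h.1
  | cons x t ih =>
    intro hw a ha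
    simp at ha; subst ha
    cases t with
    | nil => exact Relation.EqvGen.refl _
    | cons b t' =>
      have htw : IsWalk G (b :: t') := ⟨by simp, hw.2.tail⟩
      have hxb : G.Adj x b := (List.chain'_cons.mp hw.2).1
      set t : List V := b :: t' with ht
      have htn : t ≠ [] := by simp [ht]
      set M : List V := wconcat t t.reverse with hM
      have hMw : IsWalk G M :=
        isWalk_wconcat htw htw.reverse (by rw [List.head?_reverse])
      have hMh : M.head? = some b := by
        rw [hM, head?_wconcat _ htn]; simp [ht]
      have hMl : M.getLast? = some b := by
        rw [hM, getLast?_wconcat htn (by simp) (by rw [List.head?_reverse]),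
          List.getLast?_reverse]; simp [ht]
      have hIH : PruneEqv G M [b] := ih htw b (by simp [ht])
      -- identity : wconcat (x::t) (x::t).reverse = wconcat (wconcat [x,b] M) [b,x]
      have hid : wconcat (x :: t) (x :: t).reverse = wconcat (wconcat [x, b] M) [b, x] := by
        have h1 : wconcat ([x, b] : List V) M = x :: M := by
          rw [wconcat_eq_dropLast_append (by simp) hMw.1 (by simp [hMh])]
          simp
        have key : ∀ (r u : List V), r ≠ [] → (r ++ u).tail = r.tail ++ u := by
          intro r u hr; cases r <;> simp_all
        rw [h1]
        show (x :: t) ++ ((x :: t).reverse).tail = (x :: M) ++ [b, x].tail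
        simp only [List.reverse_cons]
        rw [key _ _ (by simp [ht])]
        simp [hM, wconcat]
      rw [hid]
      have hxbw : IsWalk G [x, b] := ⟨by simp, by simp [hxb]⟩
      have hbxw : IsWalk G [b, x] := ⟨by simp, by simp [G.symm hxb]⟩
      have s1 : PruneEqv G (wconcat [x, b] M) (wconcat [x, b] [b]) :=
        PruneEqv.wconcat_left hxbw hIH (by simp [hMh])
      rw [wconcat_single] at s1
      have s2 : PruneEqv G (wconcat (wconcat [x, b] M) [b, x]) (wconcat [x, b] [b, x]) :=
        PruneEqv.wconcat_right s1 hbxw (by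
          have := s1.getLast?_eq
          rw [this]; simp)
      have h3 : wconcat ([x, b] : List V) [b, x] = [x, b, x] := by simp [wconcat]
      rw [h3] at s2
      have s3 : PruneEqv G [x, b, x] [x] :=
        pruneEqv_of_pruneOf ⟨by simp, by simp [hxb, G.symm hxb]⟩ ⟨[], [], x, b, by simp, by simp⟩
      exact Relation.EqvGen.trans _ _ _ s2 s3

end PruneCtx

section Spider
variable {G : WalkGraph V}

lemma SpiderStep.symm {l m : List V} (h : SpiderStep G l m) : SpiderStep G m l := by
  obtain ⟨h1, h2, h3, i, hi0, hi1, hag⟩ := h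
  exact ⟨h2, h1, h3.symm, i, hi0, h3 ▸ hi1, fun j hj => (hag j hj).symm⟩

lemma SpiderStep.head?_eq {l m : List V} (h : SpiderStep G l m) : l.head? = m.head? := by
  obtain ⟨h1, h2, h3, i, hi0, hi1, hag⟩ := h
  rw [List.head?_eq_getElem?, List.head?_eq_getElem?]
  exact hag 0 (by omega)

lemma SpiderStep.getLast?_eq {l m : List V} (h : SpiderStep G l m) :
    l.getLast? = m.getLast? := by
  obtain ⟨h1, h2, h3, i, hi0, hi1, hag⟩ := h
  rw [List.getLast?_eq_getElem?, List.getLast?_eq_getElem?, ← h3]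
  exact hag (l.length - 1) (by omega)

lemma SpiderStep.wconcat_right {l m n : List V} (h : SpiderStep G l m) (hn : IsWalk G n)
    (he : l.getLast? = n.head?) : SpiderStep G (wconcat l n) (wconcat m n) := by
  obtain ⟨h1, h2, h3, i, hi0, hi1, hag⟩ := h
  refine ⟨isWalk_wconcat h1 hn he, isWalk_wconcat h2 hn (by
      rw [← (SpiderStep.getLast?_eq ⟨h1, h2, h3, i, hi0, hi1, hag⟩)]; exact he), ?_, i, hi0, ?_, ?_⟩
  · simp [wconcat, h3]
  · simp only [wconcat, List.length_append]; omega
  · intro j hj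
    simp only [wconcat, List.getElem?_append, h3]
    split
    · exact hag j hj
    · rfl

lemma SpiderStep.wconcat_left {l m γ : List V} (hg : IsWalk G γ)
    (he : γ.getLast? = l.head?) (h : SpiderStep G l m) :
    SpiderStep G (wconcat γ l) (wconcat γ m) := by
  have hem : γ.getLast? = m.head? := he.trans h.head?_eq
  obtain ⟨h1, h2, h3, i, hi0, hi1, hag⟩ := h
  have hwl : IsWalk G (wconcat γ l) := isWalk_wconcat hg h1 he
  have hwm : IsWalk G (wconcat γ m) := isWalk_wconcat hg h2 hem
  rw [wconcat_eq_dropLast_append hg.1 h1.1 he] at hwl ⊢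
  rw [wconcat_eq_dropLast_append hg.1 h2.1 hem] at hwm ⊢
  have hγ1 : 1 ≤ γ.length := List.length_pos_iff.mpr hg.1
  refine ⟨hwl, hwm, by simp [h3], γ.dropLast.length + i, by omega, ?_, ?_⟩
  · simp only [List.length_append]; omega
  · intro j hj
    rcases lt_or_ge j γ.dropLast.length with hlt | hge
    · rw [List.getElem?_append, List.getElem?_append, if_pos hlt, if_pos hlt]
    · rw [List.getElem?_append_right hge, List.getElem?_append_right hge]
      exact hag _ (by omega)

lemma pruneEqv_homEqv {l m : List V} (h : PruneEqv G l m) : HomEqv G l m :=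
  Relation.EqvGen.mono (r := PruneStep G) (p := fun l m => PruneStep G l m ∨ SpiderStep G l m)
    (fun _ _ hs => Or.inl hs) _ _ h

lemma homStep_head?_eq {l m : List V} (h : PruneStep G l m ∨ SpiderStep G l m) :
    l.head? = m.head? := by
  rcases h with h | h
  · exact h.head?_eq
  · exact h.head?_eq

lemma homStep_getLast?_eq {l m : List V} (h : PruneStep G l m ∨ SpiderStep G l m) :
    l.getLast? = m.getLast? := by
  rcases h with h | h
  · exact h.getLast?_eq
  · exact h.getLast?_eq

lemma HomEqv.head?_eq {l m : List V} (h : HomEqv G l m) : l.head? = m.head? := by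
  induction h with
  | rel _ _ h => exact homStep_head?_eq h
  | refl => rfl
  | symm _ _ _ ih => exact ih.symm
  | trans _ _ _ _ _ ih1 ih2 => exact ih1.trans ih2

lemma HomEqv.getLast?_eq {l m : List V} (h : HomEqv G l m) : l.getLast? = m.getLast? := by
  induction h with
  | rel _ _ h => exact homStep_getLast?_eq h
  | refl => rfl
  | symm _ _ _ ih => exact ih.symm
  | trans _ _ _ _ _ ih1 ih2 => exact ih1.trans ih2

lemma HomEqv.wconcat_right {l m n : List V} (h : HomEqv G l m) (hn : IsWalk G n) :
    l.getLast? = n.head? → HomEqv G (wconcat l n) (wconcat m n) := by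
  induction h with
  | rel a b hab =>
      intro he
      refine Relation.EqvGen.rel _ _ ?_
      rcases hab with h' | h'
      · exact Or.inl (h'.wconcat_right hn he)
      · exact Or.inr (h'.wconcat_right hn he)
  | refl a => exact fun _ => Relation.EqvGen.refl _
  | symm a b hab ih =>
      intro he
      exact Relation.EqvGen.symm _ _ (ih ((HomEqv.getLast?_eq hab) ▸ he))
  | trans a b c hab hbc ih1 ih2 =>
      intro he
      exact Relation.EqvGen.trans _ _ _ (ih1 he) (ih2 ((HomEqv.getLast?_eq hab) ▸ he))

lemma HomEqv.wconcat_left {l m γ : List V} (hg : IsWalk G γ) (h : HomEqv G l m) :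
    γ.getLast? = l.head? → HomEqv G (wconcat γ l) (wconcat γ m) := by
  induction h with
  | rel a b hab =>
      intro he
      refine Relation.EqvGen.rel _ _ ?_
      rcases hab with h' | h'
      · exact Or.inl (h'.wconcat_left hg he)
      · exact Or.inr (SpiderStep.wconcat_left hg he h')
  | refl a => exact fun _ => Relation.EqvGen.refl _
  | symm a b hab ih =>
      intro he
      exact Relation.EqvGen.symm _ _ (ih ((HomEqv.head?_eq hab) ▸ he))
  | trans a b c hab hbc ih1 ih2 =>
      intro he
      exact Relation.EqvGen.trans _ _ _ (ih1 he) (ih2 ((HomEqv.head?_eq hab) ▸ he))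

end Spider

section Diamond
variable {G : WalkGraph V}

lemma InDiamondSubgroup.isWalkFrom {v : V} {δ : List V}
    (h : InDiamondSubgroup G v δ) : IsWalkFrom G v v δ := by
  induction h with
  | nil => exact ⟨by simp, by simp, by simp⟩
  | cons γ d δ u hγ hd hd5 hδ ih =>
      exact ((hγ.wconcat' hd).wconcat' hγ.reverse).wconcat' ih

lemma InDiamondSubgroup.mul {v : V} {δ₁ δ₂ : List V}
    (h1 : InDiamondSubgroup G v δ₁) (h2 : InDiamondSubgroup G v δ₂) :
    InDiamondSubgroup G v (wconcat δ₁ δ₂) := by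
  induction h1 with
  | nil =>
      have hh : δ₂.head? = some v := h2.isWalkFrom.2.1
      have : wconcat [v] δ₂ = δ₂ := by
        cases δ₂ with
        | nil => simp at hh
        | cons c t => simp at hh; subst hh; simp [wconcat]
      rw [this]; exact h2
  | cons γ d δ u hγ hd hd5 hδ ih =>
      rw [wconcat_assoc _ _ _ hδ.isWalkFrom.ne_nil]
      exact InDiamondSubgroup.cons _ _ _ _ hγ hd hd5 ih

/-- Any diamond (closed walk of length 4) is null-homotopic. -/
lemma diamond_homEqv {u : V} {d : List V} (hd : IsWalkFrom G u u d) (h5 : d.length = 5) :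
    HomEqv G d [u] := by
  obtain ⟨hc, hh, hl⟩ := hd
  obtain ⟨a, b, c, rfl⟩ : ∃ a b c, d = [u, a, b, c, u] := by
    rcases d with _ | ⟨x0, d⟩; · simp at h5
    rcases d with _ | ⟨a, d⟩; · simp at h5
    rcases d with _ | ⟨b, d⟩; · simp at h5
    rcases d with _ | ⟨c, d⟩; · simp at h5
    rcases d with _ | ⟨x4, d⟩; · simp at h5
    rcases d with _ | ⟨y, d⟩
    · have h1 : x0 = u := by simpa using hh
      have h2 : x4 = u := by simpa using hl
      exact ⟨a, b, c, by rw [h1, h2]⟩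
    · simp at h5
  simp only [List.chain'_cons, List.chain'_singleton, and_true] at hc
  obtain ⟨hua, hab, hbc, hcu⟩ := hc
  have hw1 : IsWalk G [u, a, b, c, u] :=
    ⟨by simp, by simp [List.chain'_cons, hua, hab, hbc, hcu]⟩
  have hw2 : IsWalk G [u, a, u, c, u] :=
    ⟨by simp, by simp [List.chain'_cons, hua, G.symm hua, G.symm hcu, hcu]⟩
  have hs : SpiderStep G [u, a, b, c, u] [u, a, u, c, u] := by
    refine ⟨hw1, hw2, by simp, 2, by omega, by simp, ?_⟩
    intro j hj
    match j with
    | 0 => rfl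
    | 1 => rfl
    | 2 => exact absurd rfl hj
    | 3 => rfl
    | 4 => rfl
    | (n+5) => rfl
  have e1 : HomEqv G [u, a, b, c, u] [u, a, u, c, u] :=
    Relation.EqvGen.rel _ _ (Or.inr hs)
  have hw3 : IsWalk G [u, c, u] := ⟨by simp, by simp [List.chain'_cons, G.symm hcu, hcu]⟩
  have e2 : HomEqv G [u, a, u, c, u] [u, c, u] :=
    pruneEqv_homEqv (pruneEqv_of_pruneOf hw2 ⟨[], [c, u], u, a, by simp, by simp⟩)
  have e3 : HomEqv G [u, c, u] [u] :=
    pruneEqv_homEqv (pruneEqv_of_pruneOf hw3 ⟨[], [], u, c, by simp, by simp⟩)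
  exact Relation.EqvGen.trans _ _ _ e1 (Relation.EqvGen.trans _ _ _ e2 e3)

/-- Every element of the diamond subgroup is null-homotopic. -/
lemma InDiamondSubgroup.homEqv_trivial {v : V} {δ : List V}
    (h : InDiamondSubgroup G v δ) : HomEqv G δ [v] := by
  induction h with
  | nil => exact Relation.EqvGen.refl _
  | cons γ d δ u hγ hd hd5 hδ ih =>
      set C : List V := wconcat (wconcat γ d) γ.reverse with hC
      have hCw : IsWalkFrom G v v C := (hγ.wconcat' hd).wconcat' hγ.reverse
      -- C * δ ≡ C * [v] = C
      have s1 : HomEqv G (wconcat C δ) (wconcat C [v]) :=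
        HomEqv.wconcat_left hCw.isWalk ih (by rw [hCw.2.2, hδ.isWalkFrom.2.1])
      rw [wconcat_single] at s1
      -- γ * d * γ⁻¹ ≡ γ * [u] * γ⁻¹ = γ * γ⁻¹
      have s2 : HomEqv G (wconcat γ d) (wconcat γ [u]) :=
        HomEqv.wconcat_left hγ.isWalk (diamond_homEqv hd hd5) (by rw [hγ.2.2, hd.2.1])
      rw [wconcat_single] at s2
      have s3 : HomEqv G C (wconcat γ γ.reverse) :=
        HomEqv.wconcat_right s2 hγ.isWalk.reverse
          (by rw [(hγ.wconcat' hd).2.2, List.head?_reverse, hγ.2.2])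
      have s4 : HomEqv G (wconcat γ γ.reverse) [v] :=
        pruneEqv_homEqv (pruneEqv_cancel γ hγ.isWalk v hγ.2.1)
      exact Relation.EqvGen.trans _ _ _ s1
        (Relation.EqvGen.trans _ _ _ s3 s4)

end Diamond

section Main
variable {G : WalkGraph V} {v : V}

lemma wconcat_trivial_left {m : List V} {v : V} (h : m.head? = some v) :
    wconcat [v] m = m := by
  cases m with
  | nil => simp at h
  | cons c t => simp at h; subst h; simp [wconcat]

/-- The key relation: `α * β⁻¹` is prune-equivalent to an element of `D`. -/
def DRel (G : WalkGraph V) (v : V) (α β : List V) : Prop :=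
  ∃ δ : List V, InDiamondSubgroup G v δ ∧ PruneEqv G (wconcat α β.reverse) δ

lemma drel_of_pruneEqv {l m : List V} (h : PruneEqv G l m)
    (hl : IsWalkFrom G v v l) (hm : IsWalkFrom G v v m) : DRel G v l m := by
  refine ⟨[v], InDiamondSubgroup.nil, ?_⟩
  have h1 : PruneEqv G (wconcat l m.reverse) (wconcat m m.reverse) :=
    h.wconcat_right hm.isWalk.reverse (by rw [hl.2.2, List.head?_reverse, hm.2.2])
  exact Relation.EqvGen.trans _ _ _ h1 (pruneEqv_cancel m hm.isWalk v hm.2.1)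

lemma drel_trans {α μ β : List V} (hα : IsWalkFrom G v v α) (hμ : IsWalkFrom G v v μ)
    (hβ : IsWalkFrom G v v β) (h1 : DRel G v α μ) (h2 : DRel G v μ β) : DRel G v α β := by
  obtain ⟨δ₁, hδ₁, hp1⟩ := h1
  obtain ⟨δ₂, hδ₂, hp2⟩ := h2
  refine ⟨wconcat δ₁ δ₂, hδ₁.mul hδ₂, ?_⟩
  have hμrev : IsWalkFrom G v v μ.reverse := hμ.reverse
  have hβrev : IsWalkFrom G v v β.reverse := hβ.reverse
  have hαμ : IsWalkFrom G v v (wconcat α μ.reverse) := hα.wconcat' hμrev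
  have hμβ : IsWalkFrom G v v (wconcat μ β.reverse) := hμ.wconcat' hβrev
  have hμμ : IsWalkFrom G v v (wconcat μ.reverse μ) := hμrev.wconcat' hμ
  -- inner cancellation
  have c1 : PruneEqv G (wconcat μ.reverse μ) [v] := by
    have := pruneEqv_cancel μ.reverse hμrev.isWalk v hμrev.2.1
    rwa [List.reverse_reverse] at this
  have c2 : PruneEqv G (wconcat (wconcat μ.reverse μ) β.reverse) (wconcat [v] β.reverse) :=
    c1.wconcat_right hβrev.isWalk (by rw [hμμ.2.2, List.head?_reverse, hβ.2.2])
  rw [wconcat_trivial_left hβrev.2.1] at c2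
  have c3 : PruneEqv G (wconcat α (wconcat (wconcat μ.reverse μ) β.reverse))
      (wconcat α β.reverse) :=
    PruneEqv.wconcat_left hα.isWalk c2
      (by rw [hα.2.2, (hμμ.wconcat' hβrev).2.1])
  have eT : wconcat (wconcat α μ.reverse) (wconcat μ β.reverse)
      = wconcat α (wconcat (wconcat μ.reverse μ) β.reverse) := by
    rw [wconcat_assoc _ _ _ hμrev.ne_nil, wconcat_assoc _ _ _ hμ.ne_nil]
  have stepA : PruneEqv G (wconcat α β.reverse)
      (wconcat (wconcat α μ.reverse) (wconcat μ β.reverse)) := by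
    rw [eT]
    exact Relation.EqvGen.symm _ _ c3
  have b1 : PruneEqv G (wconcat (wconcat α μ.reverse) (wconcat μ β.reverse))
      (wconcat (wconcat α μ.reverse) δ₂) :=
    PruneEqv.wconcat_left hαμ.isWalk hp2 (by rw [hαμ.2.2, hμβ.2.1])
  have b2 : PruneEqv G (wconcat (wconcat α μ.reverse) δ₂) (wconcat δ₁ δ₂) :=
    hp1.wconcat_right hδ₂.isWalkFrom.isWalk (by rw [hαμ.2.2, hδ₂.isWalkFrom.2.1])
  exact Relation.EqvGen.trans _ _ _ stepA
    (Relation.EqvGen.trans _ _ _ b1 b2)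

end Main

section SpiderDrel
variable {G : WalkGraph V} {v : V}

lemma spider_drel {l m : List V} (h : SpiderStep G l m)
    (hl : IsWalkFrom G v v l) (hm : IsWalkFrom G v v m) : DRel G v l m := by
  obtain ⟨hwl, hwm, hlen, i, hi0, hi1, hag⟩ := h
  have hiL : i < l.length := by omega
  have hiM : i < m.length := by omega
  set p : List V := l.take i with hpdef
  set x : V := l[i]'hiL with hxdef
  set y : V := m[i]'hiM with hydef
  set s : List V := l.drop (i + 1) with hsdef
  have hp : m.take i = p := by
    apply List.ext_getElem?
    intro j
    rw [List.getElem?_take, hpdef, List.getElem?_take]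
    split
    · exact (hag j (by omega)).symm
    · rfl
  have hs : m.drop (i + 1) = s := by
    apply List.ext_getElem?
    intro j
    rw [List.getElem?_drop, hsdef, List.getElem?_drop]
    exact (hag (i + 1 + j) (by omega)).symm
  have hleq : l = p ++ x :: s := by
    conv_lhs => rw [← List.take_append_drop i l]
    rw [List.drop_eq_getElem_cons hiL]
  have hmeq : m = p ++ y :: s := by
    conv_lhs => rw [← List.take_append_drop i m]
    rw [List.drop_eq_getElem_cons hiM, hp, hs]
  have hpne : p ≠ [] := by
    have h1 : p.length = i := by
      rw [hpdef, List.length_take]; omega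
    intro h0
    rw [h0] at h1; simp at h1; omega
  have hsne : s ≠ [] := by
    have h1 : s.length = l.length - (i + 1) := by
      rw [hsdef, List.length_drop]
    intro h0
    rw [h0] at h1; simp at h1; omega
  have hptail : s = s.head hsne :: s.tail := (List.head_cons_tail s hsne).symm
  set b : V := s.head hsne with hbdef
  set a : V := p.getLast hpne with hadef
  have hpl : p.getLast? = some a := List.getLast?_eq_getLast hpne
  have hsh : s.head? = some b := by rw [hptail]; rfl
  -- adjacency facts
  have hcl := hwl.2
  rw [hleq, List.chain'_append] at hcl
  obtain ⟨hcp, hcxs, hconn⟩ := hcl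
  have hax : G.Adj a x := hconn a hpl x rfl
  have hxb : G.Adj x b := by
    rw [hptail] at hcxs
    exact (List.chain'_cons.mp hcxs).1
  have hcs : s.Chain' G.Adj := hcxs.tail
  have hcm := hwm.2
  rw [hmeq, List.chain'_append] at hcm
  obtain ⟨-, hcys, hconn2⟩ := hcm
  have hay : G.Adj a y := hconn2 a hpl y rfl
  have hyb : G.Adj y b := by
    rw [hptail] at hcys
    exact (List.chain'_cons.mp hcys).1
  -- endpoint facts
  have hph : p.head? = some v := by
    rw [List.head?_eq_getElem?, hpdef, List.getElem?_take, if_pos hi0,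
      ← List.head?_eq_getElem?]
    exact hl.2.1
  have hpγ : IsWalkFrom G v a p := ⟨hcp, hph, hpl⟩
  have hd : IsWalkFrom G a a [a, x, b, y, a] := by
    refine ⟨?_, by simp, by simp⟩
    simp only [List.chain'_cons, List.chain'_singleton, and_true]
    exact ⟨hax, hxb, G.symm hyb, G.symm hay⟩
  -- the conjugated diamond
  have hδD : InDiamondSubgroup G v (wconcat (wconcat p [a, x, b, y, a]) p.reverse) := by
    have h0 := InDiamondSubgroup.cons p [a, x, b, y, a] [v] a hpγ hd rfl
      InDiamondSubgroup.nil
    rwa [wconcat_single] at h0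
  refine ⟨wconcat (wconcat p [a, x, b, y, a]) p.reverse, hδD, ?_⟩
  -- abbreviations
  set A : List V := p ++ [x, b] with hAdef
  set B : List V := b :: y :: p.reverse with hBdef
  set M : List V := wconcat s s.reverse with hMdef
  have hsw : IsWalk G s := ⟨hsne, hcs⟩
  have hAw : IsWalk G A := by
    refine ⟨by simp [hAdef], ?_⟩
    rw [hAdef, List.chain'_append]
    exact ⟨hcp, by simp [hxb], by simp [hpl, hax]⟩
  have hAl : A.getLast? = some b := by
    rw [hAdef, List.getLast?_append_of_ne_nil _ (by simp)]; rfl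
  have hBw : IsWalk G B := by
    refine ⟨by simp [hBdef], ?_⟩
    rw [hBdef]
    rw [List.chain'_cons]
    refine ⟨G.symm hyb, ?_⟩
    have : y :: p.reverse = [y] ++ p.reverse := by simp
    rw [this, List.chain'_append]
    refine ⟨by simp, chain'_reverse_of hcp, ?_⟩
    intro z hz w hw
    simp at hz
    rw [List.head?_reverse, hpl] at hw
    simp at hw
    rw [← hz, ← hw]
    exact G.symm hay
  have hMw : IsWalk G M := isWalk_wconcat hsw hsw.reverse (by rw [List.head?_reverse])
  have hMh : M.head? = some b := by rw [hMdef, head?_wconcat _ hsne, hsh]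
  have hcancel : PruneEqv G M [b] := pruneEqv_cancel s hsw b hsh
  -- structural identities
  have E_l : l = wconcat A s := by
    rw [hleq, hAdef, wconcat]
    conv_lhs => rw [hptail]
    simp
  have E_m : m = wconcat (p ++ [y, b]) s := by
    rw [hmeq, wconcat]
    conv_lhs => rw [hptail]
    simp
  have hrev : m.reverse = wconcat s.reverse B := by
    rw [E_m, reverse_wconcat (by simp) hsne
      (by rw [List.getLast?_append_of_ne_nil _ (by simp), hsh]; rfl)]
    congr 1
    simp [hBdef]
  have T0 : wconcat l m.reverse = wconcat (wconcat A M) B := by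
    calc wconcat l m.reverse = wconcat l (wconcat s.reverse B) := by rw [hrev]
      _ = wconcat (wconcat l s.reverse) B := by
            rw [wconcat_assoc _ _ _ (by simp [hsne])]
      _ = wconcat (wconcat (wconcat A s) s.reverse) B := by rw [← E_l]
      _ = wconcat (wconcat A M) B := by rw [wconcat_assoc A s s.reverse hsne, hMdef]
  have P1 : PruneEqv G (wconcat A M) A := by
    have h1 : PruneEqv G (wconcat A M) (wconcat A [b]) :=
      PruneEqv.wconcat_left hAw hcancel (by rw [hAl, hMh])
    rwa [wconcat_single] at h1
  have P2 : PruneEqv G (wconcat (wconcat A M) B) (wconcat A B) :=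
    P1.wconcat_right hBw (by rw [P1.getLast?_eq, hAl, hBdef]; rfl)
  have hrp : p.reverse = a :: p.reverse.tail := by
    have h1 : p.reverse.head? = some a := by rw [List.head?_reverse, hpl]
    cases hrv : p.reverse with
    | nil => rw [hrv] at h1; simp at h1
    | cons z t => rw [hrv] at h1; simp at h1; simp [h1]
  have E_fin : wconcat A B = wconcat (wconcat p [a, x, b, y, a]) p.reverse := by
    rw [hAdef, hBdef, wconcat, wconcat, wconcat]
    conv_rhs => rw [hrp]
    simp
    conv_rhs => rw [hadef]
    exact (List.dropLast_append_getLast hpne).symm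
  rw [T0, ← E_fin]
  exact P2

end SpiderDrel

section Final
variable {G : WalkGraph V} {v : V}

lemma homStep_isWalks {l m : List V} (h : PruneStep G l m ∨ SpiderStep G l m) :
    IsWalk G l ∧ IsWalk G m := by
  rcases h with h | h
  · exact ⟨h.1, h.2.1⟩
  · exact ⟨h.1, h.2.1⟩

lemma main_induction {l m : List V} (h : HomEqv G l m) :
    (IsWalkFrom G v v l ↔ IsWalkFrom G v v m) ∧
      (IsWalkFrom G v v l → DRel G v l m ∧ DRel G v m l) := by
  induction h with
  | rel a b hab =>
      have hh := homStep_head?_eq hab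
      have hla := homStep_getLast?_eq hab
      obtain ⟨hwa, hwb⟩ := homStep_isWalks hab
      have hiff : IsWalkFrom G v v a ↔ IsWalkFrom G v v b := by
        constructor
        · intro hfa; exact ⟨hwb.2, hh ▸ hfa.2.1, hla ▸ hfa.2.2⟩
        · intro hfb; exact ⟨hwa.2, hh.symm ▸ hfb.2.1, hla.symm ▸ hfb.2.2⟩
      refine ⟨hiff, fun hfa => ?_⟩
      have hfb := hiff.mp hfa
      rcases hab with h' | h'
      · exact ⟨drel_of_pruneEqv (Relation.EqvGen.rel _ _ h') hfa hfb,
          drel_of_pruneEqv (Relation.EqvGen.rel _ _ h'.symm) hfb hfa⟩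
      · exact ⟨spider_drel h' hfa hfb, spider_drel h'.symm hfb hfa⟩
  | refl a =>
      exact ⟨Iff.rfl, fun hfa =>
        ⟨drel_of_pruneEqv (Relation.EqvGen.refl _) hfa hfa,
         drel_of_pruneEqv (Relation.EqvGen.refl _) hfa hfa⟩⟩
  | symm a b hab ih =>
      exact ⟨ih.1.symm, fun hfb => ((ih.2 (ih.1.mpr hfb)).symm)⟩
  | trans a b c hab hbc ih1 ih2 =>
      refine ⟨ih1.1.trans ih2.1, fun hfa => ?_⟩
      have hfb := ih1.1.mp hfa
      have hfc := ih2.1.mp hfb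
      obtain ⟨r1, r1'⟩ := ih1.2 hfa
      obtain ⟨r2, r2'⟩ := ih2.2 hfb
      exact ⟨drel_trans hfa hfb hfc r1 r2, drel_trans hfc hfb hfa r2' r1'⟩

end Final

/-- for a connected graph `G`, the quotient map from the walk group at
`v` to the fundamental group `Π₁(G,v)` (both with concatenation; it is a surjective
homomorphism since both consist of classes of the same closed walks) has kernel the
normal subgroup `D` generated by conjugated diamonds: two closed walks are homotopic
rel endpoints iff `α * β⁻¹` lies in `D` up to prune equivalence. Hence
`Π₁(G,v) ≅ 𝔚ᵥ(G)/D`. -/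
theorem stmt13 (G : WalkGraph V) (v : V)
    (hconn : ∀ u w : V, ∃ l : List V, IsWalkFrom G u w l) :
    ∀ α β : List V, IsWalkFrom G v v α → IsWalkFrom G v v β →
      (HomEqv G α β ↔
        ∃ δ : List V, InDiamondSubgroup G v δ ∧ PruneEqv G (wconcat α β.reverse) δ) := by
  intro α β hα hβ
  constructor
  · intro hhom
    exact ((main_induction hhom).2 hα).1
  · rintro ⟨δ, hδ, hpr⟩
    have hδw := hδ.isWalkFrom
    have h1 : HomEqv G (wconcat α β.reverse) δ := pruneEqv_homEqv hpr
    have h2 : HomEqv G (wconcat (wconcat α β.reverse) β) (wconcat δ β) :=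
      h1.wconcat_right hβ.isWalk ((hα.wconcat' hβ.reverse).2.2.trans hβ.2.1.symm)
    have h3 : HomEqv G (wconcat δ β) β := by
      have h3' : HomEqv G (wconcat δ β) (wconcat [v] β) :=
        hδ.homEqv_trivial.wconcat_right hβ.isWalk (hδw.2.2.trans hβ.2.1.symm)
      rwa [wconcat_trivial_left hβ.2.1] at h3'
    have h4 : HomEqv G α (wconcat (wconcat α β.reverse) β) := by
      have e : wconcat (wconcat α β.reverse) β = wconcat α (wconcat β.reverse β) :=
        wconcat_assoc _ _ _ (by simp [hβ.ne_nil])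
      have c0 : PruneEqv G (wconcat β.reverse β) [v] := by
        have := pruneEqv_cancel β.reverse hβ.isWalk.reverse v
          (by rw [List.head?_reverse, hβ.2.2])
        rwa [List.reverse_reverse] at this
      have c1 : PruneEqv G (wconcat α (wconcat β.reverse β)) (wconcat α [v]) :=
        PruneEqv.wconcat_left hα.isWalk c0
          (by rw [hα.2.2, head?_wconcat _ (by simp [hβ.ne_nil]), List.head?_reverse, hβ.2.2])
      rw [wconcat_single] at c1
      rw [e]
      exact Relation.EqvGen.symm _ _ (pruneEqv_homEqv c1)
    exact Relation.EqvGen.trans _ _ _ h4 (Relation.EqvGen.trans _ _ _ h2 h3)
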